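/- Let T > 0 and let u : [0,T] × [0,1] → ℝ be a C² function satisfying the one-dimensional wave equation ∂ₜ²u = ∂ₓ²u on [0,T] × [0,1] together with the Dirichlet boundary conditions u(t,0) = u(t,1) = 0 for all t ∈ [0,T]. Then (1/2)∫₀ᵀ (∂ₓu(t,1))² dt = [∫₀¹ ∂ₜu(t,x) · x·∂ₓu(t,x) dx]ₜ₌₀^{t=T} + (1/2)∫₀ᵀ∫₀¹ [(∂ₜu)² + (∂ₓu)²](t,x) dx dt, where [F(t)]ₜ₌₀^{t=T} denotes F(T) − F(0). -/

import Mathlib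

open Real Set MeasureTheory

/-- multiplier identity for the 1D wave equation with Dirichlet
boundary conditions on `[0,T] × [0,1]`. Here `deriv (fun s => u s x) t` is the
time derivative `∂ₜu(t,x)` and `deriv (fun z => u t z) x` is `∂ₓu(t,x)`. -/
theorem wave_multiplier_identity
    (T : ℝ) (hT : 0 < T) (u : ℝ → ℝ → ℝ)
    (hu : ContDiff ℝ 2 (fun p : ℝ × ℝ => u p.1 p.2))
    (hwave : ∀ t ∈ Icc (0:ℝ) T, ∀ x ∈ Icc (0:ℝ) 1,
      deriv (fun s => deriv (fun s' => u s' x) s) t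
        = deriv (fun z => deriv (fun z' => u t z') z) x)
    (hbc0 : ∀ t ∈ Icc (0:ℝ) T, u t 0 = 0)
    (hbc1 : ∀ t ∈ Icc (0:ℝ) T, u t 1 = 0) :
    1 / 2 * ∫ t in (0:ℝ)..T, (deriv (fun z => u t z) 1) ^ 2
      = ((∫ x in (0:ℝ)..1, deriv (fun s => u s x) T * (x * deriv (fun z => u T z) x))
          - ∫ x in (0:ℝ)..1, deriv (fun s => u s x) 0 * (x * deriv (fun z => u 0 z) x))
        + 1 / 2 * ∫ t in (0:ℝ)..T, ∫ x in (0:ℝ)..1,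
            ((deriv (fun s => u s x) t) ^ 2 + (deriv (fun z => u t z) x) ^ 2) := by
  set P : ℝ × ℝ → ℝ := fun p => u p.1 p.2 with hPdef
  have hP : ContDiff ℝ 2 P := hu
  have hPd : Differentiable ℝ P := hP.differentiable two_ne_zero
  have hf'c : ContDiff ℝ 1 (fderiv ℝ P) := hP.fderiv_right (by norm_num)
  have hf'd : Differentiable ℝ (fderiv ℝ P) := hf'c.differentiable one_ne_zero
  set v : ℝ → ℝ → ℝ := fun t x => fderiv ℝ P (t, x) (1, 0) with hvdef
  set w : ℝ → ℝ → ℝ := fun t x => fderiv ℝ P (t, x) (0, 1) with hwdef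
  set vt : ℝ → ℝ → ℝ := fun t x => fderiv ℝ (fderiv ℝ P) (t, x) (1, 0) (1, 0) with hvtdef
  set vx : ℝ → ℝ → ℝ := fun t x => fderiv ℝ (fderiv ℝ P) (t, x) (0, 1) (1, 0) with hvxdef
  set wt : ℝ → ℝ → ℝ := fun t x => fderiv ℝ (fderiv ℝ P) (t, x) (1, 0) (0, 1) with hwtdef
  set wx : ℝ → ℝ → ℝ := fun t x => fderiv ℝ (fderiv ℝ P) (t, x) (0, 1) (0, 1) with hwxdef
  -- straight lines
  have hlineT : ∀ (x t : ℝ), HasDerivAt (fun s : ℝ => ((s, x) : ℝ × ℝ)) ((1:ℝ), (0:ℝ)) t :=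
    fun x t => (hasDerivAt_id t).prodMk (hasDerivAt_const t x)
  have hlineX : ∀ (t x : ℝ), HasDerivAt (fun z : ℝ => ((t, z) : ℝ × ℝ)) ((0:ℝ), (1:ℝ)) x :=
    fun t x => (hasDerivAt_const x t).prodMk (hasDerivAt_id x)
  -- first-order partial derivatives
  have hv : ∀ t x : ℝ, HasDerivAt (fun s => u s x) (v t x) t := fun t x =>
    ((hPd (t, x)).hasFDerivAt.comp_hasDerivAt t (hlineT x t) :)
  have hw : ∀ t x : ℝ, HasDerivAt (fun z => u t z) (w t x) x := fun t x =>
    (hPd (t, x)).hasFDerivAt.comp_hasDerivAt x (hlineX t x)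
  have hdv : ∀ t x : ℝ, deriv (fun s => u s x) t = v t x := fun t x => (hv t x).deriv
  have hdw : ∀ t x : ℝ, deriv (fun z => u t z) x = w t x := fun t x => (hw t x).deriv
  -- second-order partial derivatives
  have hVF : ∀ p : ℝ × ℝ, HasFDerivAt (fun q : ℝ × ℝ => fderiv ℝ P q (1, 0))
      ((ContinuousLinearMap.apply ℝ ℝ (((1:ℝ), (0:ℝ)) : ℝ × ℝ)).comp
        (fderiv ℝ (fderiv ℝ P) p)) p := fun p =>
    (ContinuousLinearMap.apply ℝ ℝ (((1:ℝ), (0:ℝ)) : ℝ × ℝ)).hasFDerivAt.comp p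
      (hf'd p).hasFDerivAt
  have hWF : ∀ p : ℝ × ℝ, HasFDerivAt (fun q : ℝ × ℝ => fderiv ℝ P q (0, 1))
      ((ContinuousLinearMap.apply ℝ ℝ (((0:ℝ), (1:ℝ)) : ℝ × ℝ)).comp
        (fderiv ℝ (fderiv ℝ P) p)) p := fun p =>
    (ContinuousLinearMap.apply ℝ ℝ (((0:ℝ), (1:ℝ)) : ℝ × ℝ)).hasFDerivAt.comp p
      (hf'd p).hasFDerivAt
  have hvtT : ∀ t x : ℝ, HasDerivAt (fun s => v s x) (vt t x) t := fun t x =>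
    ((hVF (t, x)).comp_hasDerivAt t (hlineT x t) :)
  have hvxX : ∀ t x : ℝ, HasDerivAt (fun z => v t z) (vx t x) x := fun t x =>
    (hVF (t, x)).comp_hasDerivAt x (hlineX t x)
  have hwtT : ∀ t x : ℝ, HasDerivAt (fun s => w s x) (wt t x) t := fun t x =>
    ((hWF (t, x)).comp_hasDerivAt t (hlineT x t) :)
  have hwxX : ∀ t x : ℝ, HasDerivAt (fun z => w t z) (wx t x) x := fun t x =>
    (hWF (t, x)).comp_hasDerivAt x (hlineX t x)
  -- Clairaut
  have hclair : ∀ t x : ℝ, wt t x = vx t x := fun t x =>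
    second_derivative_symmetric (fun p => (hPd p).hasFDerivAt)
      (hf'd (t, x)).hasFDerivAt ((1:ℝ), (0:ℝ)) ((0:ℝ), (1:ℝ))
  -- the wave equation in terms of v, w
  have hwaveq : ∀ t ∈ Icc (0:ℝ) T, ∀ x ∈ Icc (0:ℝ) 1, vt t x = wx t x := by
    intro t ht x hx
    have h1 : (fun s => deriv (fun s' => u s' x) s) = fun s => v s x :=
      funext fun s => (hv s x).deriv
    have h2 : (fun z => deriv (fun z' => u t z') z) = fun z => w t z :=
      funext fun z => (hw t z).deriv
    have h := hwave t ht x hx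
    rw [h1, h2, (hvtT t x).deriv, (hwxX t x).deriv] at h
    exact h
  -- boundary : time derivative vanishes at x = 1
  have hv1 : ∀ t ∈ Icc (0:ℝ) T, v t 1 = 0 := by
    intro t ht
    have h : HasDerivWithinAt (fun _ : ℝ => (0:ℝ)) (v t 1) (Icc (0:ℝ) T) t :=
      ((hv t 1).hasDerivWithinAt (s := Icc (0:ℝ) T)).congr
        (fun s hs => (hbc1 s hs).symm) (hbc1 t ht).symm
    have h2 := h.derivWithin (uniqueDiffOn_Icc hT t ht)
    have h3 := (hasDerivWithinAt_const t (Icc (0:ℝ) T) (0:ℝ)).derivWithin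
      (uniqueDiffOn_Icc hT t ht)
    rw [← h2, h3]
  -- continuity facts
  have hvc : Continuous (fun p : ℝ × ℝ => v p.1 p.2) :=
    (hf'c.continuous).clm_apply continuous_const
  have hwc : Continuous (fun p : ℝ × ℝ => w p.1 p.2) :=
    (hf'c.continuous).clm_apply continuous_const
  have hf''c : Continuous (fderiv ℝ (fderiv ℝ P)) := (hf'c.fderiv_right (m := 0) (by norm_num)).continuous
  have hvxc : Continuous (fun p : ℝ × ℝ => vx p.1 p.2) :=
    (hf''c.clm_apply continuous_const).clm_apply continuous_const
  have hwxc : Continuous (fun p : ℝ × ℝ => wx p.1 p.2) :=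
    (hf''c.clm_apply continuous_const).clm_apply continuous_const
  set φ : ℝ → ℝ → ℝ := fun t x => x * (v t x * vx t x + w t x * wx t x) with hφdef
  have hφc : Continuous (fun p : ℝ × ℝ => φ p.1 p.2) :=
    continuous_snd.mul ((hvc.mul hvxc).add (hwc.mul hwxc))
  have hvcT : ∀ t : ℝ, Continuous fun x => v t x :=
    fun t => hvc.comp (continuous_const.prodMk continuous_id)
  have hwcT : ∀ t : ℝ, Continuous fun x => w t x :=
    fun t => hwc.comp (continuous_const.prodMk continuous_id)
  have hwcX : ∀ x : ℝ, Continuous fun t => w t x :=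
    fun x => hwc.comp (continuous_id.prodMk continuous_const)
  have hφcT : ∀ t : ℝ, Continuous fun x => φ t x :=
    fun t => hφc.comp (continuous_const.prodMk continuous_id)
  have hψc : Continuous (fun p : ℝ × ℝ =>
      ((v p.1 p.2) ^ 2 + (w p.1 p.2) ^ 2) / 2 + φ p.1 p.2) :=
    (((hvc.pow 2).add (hwc.pow 2)).div_const 2).add hφc
  -- space derivative of the multiplier density
  have hH : ∀ t x : ℝ, HasDerivAt (fun z => z * ((v t z) ^ 2 + (w t z) ^ 2) / 2)
      (((v t x) ^ 2 + (w t x) ^ 2) / 2 + φ t x) x := by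
    intro t x
    have h := (((hasDerivAt_id x).fun_mul
      (((hvxX t x).fun_pow 2).fun_add ((hwxX t x).fun_pow 2))).div_const 2)
    refine h.congr_deriv ?_
    simp only [hφdef, id_eq]
    push_cast
    ring
  -- time derivative of the multiplier density, on the rectangle
  have hG : ∀ t ∈ Icc (0:ℝ) T, ∀ x ∈ Icc (0:ℝ) 1,
      HasDerivAt (fun s => v s x * (x * w s x)) (φ t x) t := by
    intro t ht x hx
    have h := (hvtT t x).fun_mul ((hasDerivAt_const t x).fun_mul (hwtT t x))
    refine h.congr_deriv ?_
    rw [hwaveq t ht x hx, hclair t x]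
    simp only [hφdef]
    ring
  -- FTC in space
  have hD : ∀ t ∈ Icc (0:ℝ) T,
      ∫ x in (0:ℝ)..1, (((v t x) ^ 2 + (w t x) ^ 2) / 2 + φ t x) = (w t 1) ^ 2 / 2 := by
    intro t ht
    have hftc := intervalIntegral.integral_eq_sub_of_hasDerivAt
      (f := fun z => z * ((v t z) ^ 2 + (w t z) ^ 2) / 2)
      (f' := fun x => ((v t x) ^ 2 + (w t x) ^ 2) / 2 + φ t x)
      (fun x _ => hH t x)
      ((hψc.comp (continuous_const.prodMk continuous_id)).intervalIntegrable 0 1)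
    rw [hftc]
    simp only [one_mul, zero_mul]
    rw [hv1 t ht]
    ring
  have hsplit : ∀ t ∈ Icc (0:ℝ) T,
      ∫ x in (0:ℝ)..1, φ t x
        = (w t 1) ^ 2 / 2 - ∫ x in (0:ℝ)..1, ((v t x) ^ 2 + (w t x) ^ 2) / 2 := by
    intro t ht
    have h := hD t ht
    have hiA : IntervalIntegrable (fun x => ((v t x) ^ 2 + (w t x) ^ 2) / 2) volume 0 1 :=
      ((((hvcT t).pow 2).add ((hwcT t).pow 2)).div_const 2).intervalIntegrable 0 1
    have hiB : IntervalIntegrable (fun x => φ t x) volume 0 1 :=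
      (hφcT t).intervalIntegrable 0 1
    rw [intervalIntegral.integral_add hiA hiB] at h
    linarith
  -- FTC in time
  have hE : ∀ x ∈ Icc (0:ℝ) 1,
      ∫ t in (0:ℝ)..T, φ t x = v T x * (x * w T x) - v 0 x * (x * w 0 x) := by
    intro x hx
    apply intervalIntegral.integral_eq_sub_of_hasDerivAt
    · intro t ht
      rw [uIcc_of_le hT.le] at ht
      exact hG t ht x hx
    · exact (hφc.comp (continuous_id.prodMk continuous_const)).intervalIntegrable 0 T
  -- Fubini
  have hFub : ∫ t in (0:ℝ)..T, ∫ x in (0:ℝ)..1, φ t x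
      = ∫ x in (0:ℝ)..1, ∫ t in (0:ℝ)..T, φ t x := by
    simp_rw [intervalIntegral.integral_of_le hT.le, intervalIntegral.integral_of_le
      (zero_le_one' ℝ)]
    apply MeasureTheory.integral_integral_swap
    rw [Measure.prod_restrict]
    exact ((hφc.continuousOn.integrableOn_compact (isCompact_Icc.prod isCompact_Icc)).mono_set
      (prod_mono Ioc_subset_Icc_self Ioc_subset_Icc_self))
  -- parametric integral continuity
  have hBc : Continuous fun t => ∫ x in (0:ℝ)..1, ((v t x) ^ 2 + (w t x) ^ 2) / 2 := by
    apply intervalIntegral.continuous_parametric_intervalIntegral_of_continuous'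
      (f := fun t x => ((v t x) ^ 2 + (w t x) ^ 2) / 2) (μ := volume)
    exact ((hvc.pow 2).add (hwc.pow 2)).div_const 2
  -- assemble
  simp_rw [hdv, hdw]
  have e1 : ∫ x in (0:ℝ)..1, ∫ t in (0:ℝ)..T, φ t x
      = (∫ x in (0:ℝ)..1, v T x * (x * w T x)) - ∫ x in (0:ℝ)..1, v 0 x * (x * w 0 x) := by
    have hi1 : IntervalIntegrable (fun x => v T x * (x * w T x)) volume 0 1 :=
      ((hvcT T).mul (continuous_id.mul (hwcT T))).intervalIntegrable 0 1
    have hi2 : IntervalIntegrable (fun x => v 0 x * (x * w 0 x)) volume 0 1 :=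
      ((hvcT 0).mul (continuous_id.mul (hwcT 0))).intervalIntegrable 0 1
    rw [← intervalIntegral.integral_sub hi1 hi2]
    apply intervalIntegral.integral_congr
    intro x hx
    rw [uIcc_of_le (zero_le_one' ℝ)] at hx
    exact hE x hx
  have e2 : ∫ t in (0:ℝ)..T, ∫ x in (0:ℝ)..1, φ t x
      = (∫ t in (0:ℝ)..T, (w t 1) ^ 2) / 2
        - ∫ t in (0:ℝ)..T, ∫ x in (0:ℝ)..1, ((v t x) ^ 2 + (w t x) ^ 2) / 2 := by
    have hi3 : IntervalIntegrable (fun t => (w t 1) ^ 2 / 2) volume 0 T :=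
      (((hwcX 1).pow 2).div_const 2).intervalIntegrable 0 T
    rw [← intervalIntegral.integral_div, ← intervalIntegral.integral_sub hi3
      (hBc.intervalIntegrable 0 T)]
    apply intervalIntegral.integral_congr
    intro t ht
    rw [uIcc_of_le hT.le] at ht
    exact hsplit t ht
  have e3 : ∫ t in (0:ℝ)..T, ∫ x in (0:ℝ)..1, ((v t x) ^ 2 + (w t x) ^ 2) / 2
      = (∫ t in (0:ℝ)..T, ∫ x in (0:ℝ)..1, ((v t x) ^ 2 + (w t x) ^ 2)) / 2 := by
    simp_rw [intervalIntegral.integral_div]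
  rw [e1] at hFub
  rw [e2, e3] at hFub
  linarith
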